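/- For any finite additive poset A, the height of A (the maximal length n of a chain a_0 < a_1 < ... < a_n) is at most the dimension of A as a ℤ/2ℤ-vector space. -/

import Mathlib

/-- An additive poset: an abelian group with a partial order satisfying
(∗): `b ≤ a → c ≤ a → b + c ≤ a` and (∗∗): `a ≤ b → a ≤ c → a ≤ a + b + c`. -/
class AdditivePoset (A : Type*) extends AddCommGroup A, PartialOrder A where
  add_le_of_le : ∀ a b c : A, b ≤ a → c ≤ a → b + c ≤ a
  le_add_add : ∀ a b c : A, a ≤ b → a ≤ c → a ≤ a + b + c

theorem stmt17 {A : Type*} [AdditivePoset A] [Fintype A] [Module (ZMod 2) A]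
    (n : ℕ) (c : Fin (n + 1) → A) (hc : StrictMono c) :
    n ≤ Module.finrank (ZMod 2) A := by
  haveI : Module.Finite (ZMod 2) A := Module.Finite.of_finite
  have h0 : ∀ a : A, (0 : A) ≤ a := by
    intro a
    have h := AdditivePoset.add_le_of_le a a a le_rfl le_rfl
    have haa : a + a = 0 := by
      have h1 : a + a = (1 + 1 : ZMod 2) • a := by rw [add_smul, one_smul]
      have h2 : (1 + 1 : ZMod 2) = 0 := by decide
      rw [h1, h2, zero_smul]
    rwa [haa] at h
  let L : A → Submodule (ZMod 2) A := fun a =>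
    { carrier := {x | x ≤ a}
      add_mem' := fun hx hy => AdditivePoset.add_le_of_le a _ _ hx hy
      zero_mem' := h0 a
      smul_mem' := by
        intro cc x hx
        fin_cases cc
        · change (0 : ZMod 2) • x ≤ a; rw [zero_smul]; exact h0 a
        · change (1 : ZMod 2) • x ≤ a; rw [one_smul]; exact hx }
  have key : ∀ j : ℕ, ∀ hj : j < n + 1,
      j ≤ Module.finrank (ZMod 2) (L (c ⟨j, hj⟩)) := by
    intro j
    induction j with
    | zero => intro _; exact Nat.zero_le _
    | succ k ih =>
      intro hj
      have hk : k < n + 1 := Nat.lt_of_succ_lt hj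
      have hlt' : (⟨k, hk⟩ : Fin (n + 1)) < ⟨k + 1, hj⟩ := by
        simp [Fin.lt_def]
      have hlt : L (c ⟨k, hk⟩) < L (c ⟨k + 1, hj⟩) := by
        constructor
        · intro x hx
          exact le_trans hx (le_of_lt (hc hlt'))
        · intro hsub
          have h1 : c ⟨k + 1, hj⟩ ≤ c ⟨k, hk⟩ := hsub (le_refl _)
          exact absurd h1 (not_le_of_gt (hc hlt'))
      have h2 := Submodule.finrank_lt_finrank_of_lt hlt
      have h3 := ih hk
      omega
  have hfin := key n (Nat.lt_succ_self n)
  exact le_trans hfin (Submodule.finrank_le _)
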